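/- Let D, H > 0 and d_min ≥ 0, and define φ(x) = 1/((x+D/2)² + H²) + 1/((x−D/2)² + H²). Consider maximizing φ(x) over x ≥ d_min/2. (i) If D ≤ 2H/√3, the maximum is attained at x* = d_min/2. (ii) If D > 2H/√3, the maximum is attained at x* = max(ε₀, d_min/2), where ε₀ = √(−(D²/4 + H²) + √(D⁴/4 + H²D²)). -/
import Mathlib

lemma key_lem (D H x y : ℝ) (hH : 0 < H)
    (h : 0 ≤ ((x ^ 2 + (D ^ 2 / 4 + H ^ 2)) * (y ^ 2 + (D ^ 2 / 4 + H ^ 2)) -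
        D ^ 2 * (D ^ 2 / 4 + H ^ 2)) * (x ^ 2 - y ^ 2)) :
    1 / ((x + D / 2) ^ 2 + H ^ 2) + 1 / ((x - D / 2) ^ 2 + H ^ 2) ≤
      1 / ((y + D / 2) ^ 2 + H ^ 2) + 1 / ((y - D / 2) ^ 2 + H ^ 2) := by
  have p1 : 0 < (x + D / 2) ^ 2 + H ^ 2 := by positivity
  have p2 : 0 < (x - D / 2) ^ 2 + H ^ 2 := by positivity
  have p3 : 0 < (y + D / 2) ^ 2 + H ^ 2 := by positivity
  have p4 : 0 < (y - D / 2) ^ 2 + H ^ 2 := by positivity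
  rw [div_add_div _ _ (ne_of_gt p1) (ne_of_gt p2), div_add_div _ _ (ne_of_gt p3) (ne_of_gt p4),
    div_le_div_iff₀ (by positivity) (by positivity)]
  have hid : (1 * ((y - D / 2) ^ 2 + H ^ 2) + ((y + D / 2) ^ 2 + H ^ 2) * 1) *
        (((x + D / 2) ^ 2 + H ^ 2) * ((x - D / 2) ^ 2 + H ^ 2)) -
      (1 * ((x - D / 2) ^ 2 + H ^ 2) + ((x + D / 2) ^ 2 + H ^ 2) * 1) *
        (((y + D / 2) ^ 2 + H ^ 2) * ((y - D / 2) ^ 2 + H ^ 2)) =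
      2 * (((x ^ 2 + (D ^ 2 / 4 + H ^ 2)) * (y ^ 2 + (D ^ 2 / 4 + H ^ 2)) -
        D ^ 2 * (D ^ 2 / 4 + H ^ 2)) * (x ^ 2 - y ^ 2)) := by ring
  linarith

theorem stmt_4 (D H dmin : ℝ) (hD : 0 < D) (hH : 0 < H) (hd : 0 ≤ dmin) :
    ((D ≤ 2 * H / Real.sqrt 3 →
      ∀ x : ℝ, dmin / 2 ≤ x →
        1 / ((x + D / 2) ^ 2 + H ^ 2) + 1 / ((x - D / 2) ^ 2 + H ^ 2) ≤
          1 / ((dmin / 2 + D / 2) ^ 2 + H ^ 2) + 1 / ((dmin / 2 - D / 2) ^ 2 + H ^ 2))) ∧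
    (D > 2 * H / Real.sqrt 3 →
      ∀ x : ℝ, dmin / 2 ≤ x →
        1 / ((x + D / 2) ^ 2 + H ^ 2) + 1 / ((x - D / 2) ^ 2 + H ^ 2) ≤
          1 / ((max (Real.sqrt (-(D ^ 2 / 4 + H ^ 2) + Real.sqrt (D ^ 4 / 4 + H ^ 2 * D ^ 2))) (dmin / 2) + D / 2) ^ 2 + H ^ 2) +
          1 / ((max (Real.sqrt (-(D ^ 2 / 4 + H ^ 2) + Real.sqrt (D ^ 4 / 4 + H ^ 2 * D ^ 2))) (dmin / 2) - D / 2) ^ 2 + H ^ 2)) := by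
  have h3 : (0:ℝ) < Real.sqrt 3 := Real.sqrt_pos.mpr (by norm_num)
  have h3sq : Real.sqrt 3 * Real.sqrt 3 = 3 := Real.mul_self_sqrt (by norm_num)
  constructor
  · intro hDle x hx
    have h1 : D * Real.sqrt 3 ≤ 2 * H := by
      calc D * Real.sqrt 3 ≤ (2 * H / Real.sqrt 3) * Real.sqrt 3 :=
            mul_le_mul_of_nonneg_right hDle (le_of_lt h3)
        _ = 2 * H := by field_simp
    have hD2 : 3 * D ^ 2 ≤ 4 * H ^ 2 := by
      have h2 := mul_self_le_mul_self (by positivity : (0:ℝ) ≤ D * Real.sqrt 3) h1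
      have h4 : (D * Real.sqrt 3) * (D * Real.sqrt 3) = 3 * D ^ 2 := by
        rw [show (D * Real.sqrt 3) * (D * Real.sqrt 3) =
          (Real.sqrt 3 * Real.sqrt 3) * (D * D) by ring, h3sq]; ring
      nlinarith
    apply key_lem D H x (dmin / 2) hH
    have hy : 0 ≤ dmin / 2 := by linarith
    have hx2 : (dmin / 2) ^ 2 ≤ x ^ 2 := by nlinarith
    have hcD : D ^ 2 ≤ D ^ 2 / 4 + H ^ 2 := by nlinarith
    have f1 : 0 ≤ (x ^ 2 + (D ^ 2 / 4 + H ^ 2)) * ((dmin / 2) ^ 2 + (D ^ 2 / 4 + H ^ 2)) -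
        D ^ 2 * (D ^ 2 / 4 + H ^ 2) := by nlinarith
    exact mul_nonneg f1 (by linarith)
  · intro hDgt x hx
    have h1 : 2 * H < D * Real.sqrt 3 := (div_lt_iff₀ h3).mp hDgt
    have hD2 : 4 * H ^ 2 < 3 * D ^ 2 := by
      have h2 := mul_self_lt_mul_self (by positivity : (0:ℝ) ≤ 2 * H) h1
      have h4 : (D * Real.sqrt 3) * (D * Real.sqrt 3) = 3 * D ^ 2 := by
        rw [show (D * Real.sqrt 3) * (D * Real.sqrt 3) =
          (Real.sqrt 3 * Real.sqrt 3) * (D * D) by ring, h3sq]; ring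
      nlinarith
    set c : ℝ := D ^ 2 / 4 + H ^ 2 with hc
    have hcpos : 0 < c := by positivity
    have hcD : c < D ^ 2 := by rw [hc]; nlinarith
    set s : ℝ := Real.sqrt c with hs
    have hs2 : s ^ 2 = c := Real.sq_sqrt (le_of_lt hcpos)
    have hspos : 0 < s := Real.sqrt_pos.mpr hcpos
    have hsD : s < D := by nlinarith
    have hsqrt : Real.sqrt (D ^ 4 / 4 + H ^ 2 * D ^ 2) = D * s := by
      rw [show D ^ 4 / 4 + H ^ 2 * D ^ 2 = (D * s) ^ 2 by rw [mul_pow, hs2, hc]; ring]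
      exact Real.sqrt_sq (by positivity)
    set e : ℝ := Real.sqrt (-(D ^ 2 / 4 + H ^ 2) + Real.sqrt (D ^ 4 / 4 + H ^ 2 * D ^ 2)) with he
    have hargpos : 0 ≤ D * s - c := by nlinarith
    have he2 : e ^ 2 = D * s - c := by
      rw [he, show -(D ^ 2 / 4 + H ^ 2) + Real.sqrt (D ^ 4 / 4 + H ^ 2 * D ^ 2) = D * s - c by
        rw [hsqrt, hc]; ring]
      exact Real.sq_sqrt hargpos
    have henn : 0 ≤ e := Real.sqrt_nonneg _
    set m : ℝ := max e (dmin / 2) with hm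
    have hmnn : 0 ≤ m := le_trans henn (le_max_left _ _)
    have hme : e ≤ m := le_max_left _ _
    have hme2 : e ^ 2 ≤ m ^ 2 := pow_le_pow_left₀ henn hme 2
    have hxnn : 0 ≤ x := le_trans (by linarith) hx
    have hmcase : m = e ∨ m = dmin / 2 := by
      rcases max_cases e (dmin / 2) with ⟨ha, hb⟩ | ⟨ha, hb⟩
      · left; rw [hm, ha]
      · right; rw [hm, ha]
    apply key_lem D H x m hH
    rw [← hc]
    clear_value m e s c
    clear hm he hs hc hsqrt
    rcases le_or_gt m x with hxm | hxm
    · -- x ≥ m : both factors nonneg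
      have hx2 : m ^ 2 ≤ x ^ 2 := pow_le_pow_left₀ hmnn hxm 2
      have hmc : D * s ≤ m ^ 2 + c := by linarith
      have hxc : D * s ≤ x ^ 2 + c := by linarith
      have hp : (D * s) * (D * s) ≤ (x ^ 2 + c) * (m ^ 2 + c) :=
        mul_le_mul hxc hmc (by positivity) (by positivity)
      have hq : (D * s) * (D * s) = D ^ 2 * c := by
        rw [show (D * s) * (D * s) = D ^ 2 * s ^ 2 by ring, hs2]
      exact mul_nonneg (by linarith) (by linarith)
    · -- x < m ⇒ m = e, both factors nonpos
      have hmeq : m = e := by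
        rcases hmcase with ha | ha
        · exact ha
        · exfalso; rw [ha] at hxm; linarith
      have hx2 : x ^ 2 ≤ m ^ 2 := pow_le_pow_left₀ hxnn (le_of_lt hxm) 2
      have hm2c : m ^ 2 + c = D * s := by rw [hmeq]; linarith [he2]
      have hxc : x ^ 2 + c ≤ D * s := by linarith
      have hp : (x ^ 2 + c) * (m ^ 2 + c) ≤ (D * s) * (D * s) := by
        rw [hm2c]
        exact mul_le_mul_of_nonneg_right hxc (by positivity)
      have hq : (D * s) * (D * s) = D ^ 2 * c := by
        rw [show (D * s) * (D * s) = D ^ 2 * s ^ 2 by ring, hs2]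
      exact mul_nonneg_of_nonpos_of_nonpos (by linarith) (by nlinarith)
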